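/- Let φ : U → V be a surjective linear map of finite-dimensional real vector spaces. Then the map φ_* : AGr^m(V) → AGr^m(U), sending an affine subspace H ⊂ V of codimension m to φ⁻¹(H), is a well-defined injective map into the affine subspaces of U of codimension m, and it is a closed embedding (a homeomorphism onto its closed image) with respect to the natural topologies on the affine Grassmannians. -/

import Mathlib

/-- Parameter space for the affine Grassmannian of codimension-`m` affine subspaces of
`W`: pairs (f, c) of a surjective continuous linear map `f : W → ℝᵐ` and `c ∈ ℝᵐ`,
topologized as a subspace of the product. -/
def AGrParam (m : ℕ) (W : Type*) [NormedAddCommGroup W] [NormedSpace ℝ W] :=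
  {p : (W →L[ℝ] (Fin m → ℝ)) × (Fin m → ℝ) // Function.Surjective p.1}

noncomputable instance (m : ℕ) (W : Type*) [NormedAddCommGroup W] [NormedSpace ℝ W] :
    TopologicalSpace (AGrParam m W) :=
  instTopologicalSpaceSubtype

/-- The affine Grassmannian `AGr m W` of affine subspaces of codimension `m` in `W`,
realized as solution sets `{x | f x = c}` of surjective affine equations. -/
structure AGr (m : ℕ) (W : Type*) [NormedAddCommGroup W] [NormedSpace ℝ W] where
  carrier : Set W
  exists_param : ∃ f : W →L[ℝ] (Fin m → ℝ),
    Function.Surjective f ∧ ∃ c : Fin m → ℝ, carrier = {x | f x = c}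

/-- The canonical surjection from parameters to the affine Grassmannian. -/
def AGrParam.toAGr {m : ℕ} {W : Type*} [NormedAddCommGroup W] [NormedSpace ℝ W]
    (p : AGrParam m W) : AGr m W :=
  ⟨{x | p.1.1 x = p.1.2}, p.1.1, p.2, p.1.2, rfl⟩

/-- The natural (quotient) topology on the affine Grassmannian. -/
noncomputable instance (m : ℕ) (W : Type*) [NormedAddCommGroup W] [NormedSpace ℝ W] :
    TopologicalSpace (AGr m W) :=
  TopologicalSpace.coinduced AGrParam.toAGr inferInstance

/-- The pull-back map `φ_* : AGr^m(V) → AGr^m(U)`, `H ↦ φ⁻¹(H)`, induced by a surjective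
linear map `φ : U → V`. -/
def pullbackAGr {m : ℕ} {U V : Type*}
    [NormedAddCommGroup U] [NormedSpace ℝ U] [FiniteDimensional ℝ U]
    [NormedAddCommGroup V] [NormedSpace ℝ V]
    (φ : U →ₗ[ℝ] V) (hφ : Function.Surjective φ) (A : AGr m V) : AGr m U := by
  refine ⟨⇑φ ⁻¹' A.carrier, ?_⟩
  obtain ⟨f, hf, c, hc⟩ := A.exists_param
  refine ⟨f.comp (LinearMap.toContinuousLinearMap φ), ?_, c, ?_⟩
  · intro y
    obtain ⟨v, hv⟩ := hf y
    obtain ⟨u, hu⟩ := hφ v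
    exact ⟨u, by simp [hu, hv]⟩
  · rw [hc]; ext u; simp

theorem AGr.ext' {m : ℕ} {W : Type*} [NormedAddCommGroup W] [NormedSpace ℝ W]
    {A B : AGr m W} (h : A.carrier = B.carrier) : A = B := by
  cases A; cases B; simp_all

lemma continuous_toAGr {m : ℕ} {W : Type*} [NormedAddCommGroup W] [NormedSpace ℝ W] :
    Continuous (AGrParam.toAGr : AGrParam m W → AGr m W) :=
  continuous_coinduced_rng

lemma isClosed_AGr_iff {m : ℕ} {W : Type*} [NormedAddCommGroup W] [NormedSpace ℝ W]
    {s : Set (AGr m W)} : IsClosed s ↔ IsClosed (AGrParam.toAGr ⁻¹' s) := by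
  rw [← isOpen_compl_iff, ← isOpen_compl_iff (s := AGrParam.toAGr ⁻¹' s),
    ← Set.preimage_compl]
  exact isOpen_coinduced

/- STATEMENT 19: for a surjective linear map `φ : U → V` of finite-dimensional real
vector spaces, the map `φ_* : AGr^m(V) → AGr^m(U)`, `H ↦ φ⁻¹(H)` (which indeed sends a
codimension-`m` affine subspace of `V` to a codimension-`m` affine subspace of `U`, as
recorded in the definition of `pullbackAGr`), is injective and a closed embedding with
respect to the natural topologies on the affine Grassmannians. -/
theorem pullbackAGr_closedEmbedding {m : ℕ} {U V : Type*}
    [NormedAddCommGroup U] [NormedSpace ℝ U] [FiniteDimensional ℝ U]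
    [NormedAddCommGroup V] [NormedSpace ℝ V] [FiniteDimensional ℝ V]
    (φ : U →ₗ[ℝ] V) (hφ : Function.Surjective φ) :
    (∀ A : AGr m V, (pullbackAGr (m := m) φ hφ A).carrier = ⇑φ ⁻¹' A.carrier) ∧
      Function.Injective (pullbackAGr (m := m) φ hφ) ∧
        Topology.IsClosedEmbedding (pullbackAGr (m := m) φ hφ) := by
  obtain ⟨s, hs⟩ := φ.exists_rightInverse_of_surjective (LinearMap.range_eq_top.2 hφ)
  have hφs : ∀ y, φ (s y) = y := fun y => DFunLike.congr_fun hs y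
  set φL : U →L[ℝ] V := LinearMap.toContinuousLinearMap φ with hφL
  set sL : V →L[ℝ] U := LinearMap.toContinuousLinearMap s with hsL
  have hcar : ∀ A : AGr m V,
      (pullbackAGr (m := m) φ hφ A).carrier = ⇑φ ⁻¹' A.carrier := fun A => rfl
  have hinj : Function.Injective (pullbackAGr (m := m) φ hφ) := by
    intro A B h
    apply AGr.ext'
    have h2 := congrArg AGr.carrier h
    rw [hcar, hcar] at h2
    exact hφ.preimage_injective h2
  -- continuity
  have hP : Continuous (fun p : AGrParam m V =>
      (⟨(p.1.1.comp φL, p.1.2), by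
        intro y
        obtain ⟨v, hv⟩ := p.2 y
        obtain ⟨u, hu⟩ := hφ v
        exact ⟨u, by simp [hu, hv, hφL]⟩⟩ : AGrParam m U)) := by
    apply Continuous.subtype_mk
    exact ((continuous_fst.comp continuous_subtype_val).clm_comp
      continuous_const).prodMk (continuous_snd.comp continuous_subtype_val)
  have hcomm : ∀ p : AGrParam m V,
      pullbackAGr (m := m) φ hφ (AGrParam.toAGr p)
        = AGrParam.toAGr (⟨(p.1.1.comp φL, p.1.2), by
            intro y
            obtain ⟨v, hv⟩ := p.2 y
            obtain ⟨u, hu⟩ := hφ v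
            exact ⟨u, by simp [hu, hv, hφL]⟩⟩ : AGrParam m U) := by
    intro p
    apply AGr.ext'
    ext u
    simp [hcar, AGrParam.toAGr, hφL]
  have hcont : Continuous (pullbackAGr (m := m) φ hφ) := by
    rw [show (instTopologicalSpaceAGr m V) =
        TopologicalSpace.coinduced AGrParam.toAGr inferInstance from rfl,
      continuous_coinduced_dom]
    have : (pullbackAGr (m := m) φ hφ) ∘ AGrParam.toAGr
        = AGrParam.toAGr ∘ (fun p : AGrParam m V =>
          (⟨(p.1.1.comp φL, p.1.2), by
            intro y
            obtain ⟨v, hv⟩ := p.2 y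
            obtain ⟨u, hu⟩ := hφ v
            exact ⟨u, by simp [hu, hv, hφL]⟩⟩ : AGrParam m U)) :=
      funext fun p => hcomm p
    rw [this]
    exact continuous_toAGr.comp hP
  -- closed map
  have hclosedmap : IsClosedMap (pullbackAGr (m := m) φ hφ) := by
    intro C hC
    rw [isClosed_AGr_iff]
    set Q : U →L[ℝ] U := sL.comp φL with hQ
    have hQx : ∀ x : U, Q x = s (φ x) := fun x => by simp [hQ, hφL, hsL]
    set S : Set (AGrParam m U) := {p | p.1.1.comp Q = p.1.1} with hS
    have hScl : IsClosed S := isClosed_eq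
      (((continuous_fst.comp continuous_subtype_val)).clm_comp continuous_const)
      (continuous_fst.comp continuous_subtype_val)
    have hsurj : ∀ p : AGrParam m U, p ∈ S → Function.Surjective (p.1.1.comp sL) := by
      intro p hp y
      obtain ⟨x, hx⟩ := p.2 y
      refine ⟨φ x, ?_⟩
      have h1 := DFunLike.congr_fun (hp : p.1.1.comp Q = p.1.1) x
      simp only [ContinuousLinearMap.comp_apply] at h1 ⊢
      rw [show sL (φ x) = Q x from by simp [hQ, hφL], h1, hx]
    let Φ : S → AGrParam m V := fun q => ⟨(q.1.1.1.comp sL, q.1.1.2), hsurj q.1 q.2⟩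
    have hΦc : Continuous Φ := by
      apply Continuous.subtype_mk
      have hv : Continuous (fun q : S => (q.1.1 : (U →L[ℝ] (Fin m → ℝ)) × (Fin m → ℝ))) :=
        continuous_subtype_val.comp (continuous_subtype_val (p := fun x : AGrParam m U => x ∈ S))
      exact ((continuous_fst.comp hv).clm_comp continuous_const).prodMk
        (continuous_snd.comp hv)
    have hKey : AGrParam.toAGr ⁻¹' (pullbackAGr (m := m) φ hφ '' C)
        = Subtype.val '' (Φ ⁻¹' (AGrParam.toAGr ⁻¹' C)) := by
      ext p
      constructor
      · rintro ⟨A, hA, hAp⟩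
        have h2 := congrArg AGr.carrier hAp
        rw [hcar] at h2
        have hcarEq : {x : U | p.1.1 x = p.1.2} = ⇑φ ⁻¹' A.carrier := h2.symm
        have hker : ∀ k : U, φ k = 0 → p.1.1 k = 0 := by
          intro k hk
          obtain ⟨x₀, hx₀⟩ := p.2 p.1.2
          have hx₀' : x₀ ∈ {x : U | p.1.1 x = p.1.2} := hx₀
          have hx₀A : φ x₀ ∈ A.carrier := by
            have h7 := hx₀'
            rw [hcarEq] at h7
            exact h7
          have hxk : x₀ + k ∈ {x : U | p.1.1 x = p.1.2} := by
            rw [hcarEq]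
            show φ (x₀ + k) ∈ A.carrier
            rw [map_add, hk, add_zero]
            exact hx₀A
          have h3 : p.1.1 (x₀ + k) = p.1.2 := hxk
          rw [map_add, hx₀] at h3
          exact add_eq_left.mp h3
        have hpS : p ∈ S := by
          show p.1.1.comp Q = p.1.1
          refine ContinuousLinearMap.ext fun x => ?_
          have hk : φ (Q x - x) = 0 := by
            rw [map_sub, hQx, hφs, sub_self]
          have h4 := hker _ hk
          rw [map_sub, sub_eq_zero] at h4
          simpa using h4
        refine ⟨⟨p, hpS⟩, ?_, rfl⟩
        have hΦA : AGrParam.toAGr (Φ ⟨p, hpS⟩) = A := by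
          apply AGr.ext'
          show {y : V | (p.1.1.comp sL) y = p.1.2} = A.carrier
          ext y
          show p.1.1 (s y) = p.1.2 ↔ y ∈ A.carrier
          constructor
          · intro hy
            have h5 : s y ∈ {x : U | p.1.1 x = p.1.2} := hy
            rw [hcarEq] at h5
            have h6 : φ (s y) ∈ A.carrier := h5
            rwa [hφs] at h6
          · intro hy
            have h5 : s y ∈ ⇑φ ⁻¹' A.carrier := by
              show φ (s y) ∈ A.carrier
              rw [hφs]; exact hy
            rw [← hcarEq] at h5
            exact h5
        show AGrParam.toAGr (Φ ⟨p, hpS⟩) ∈ C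
        rw [hΦA]; exact hA
      · rintro ⟨⟨p, hp⟩, hmem, rfl⟩
        refine ⟨AGrParam.toAGr (Φ ⟨p, hp⟩), hmem, ?_⟩
        apply AGr.ext'
        ext x
        have h1 := DFunLike.congr_fun (hp : p.1.1.comp Q = p.1.1) x
        simp only [ContinuousLinearMap.comp_apply, hQx] at h1
        show p.1.1 (s (φ x)) = p.1.2 ↔ p.1.1 x = p.1.2
        rw [h1]
    rw [hKey]
    exact hScl.isClosedMap_subtype_val _ (IsClosed.preimage hΦc (isClosed_AGr_iff.1 hC))
  exact ⟨hcar, hinj,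
    Topology.IsClosedEmbedding.of_continuous_injective_isClosedMap hcont hinj hclosedmap⟩
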